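/- Let C be a v×v real symmetric positive semidefinite matrix, and let Q be a v×s real matrix whose column space equals the column space of C. Let P be the orthogonal projection matrix onto the column space of C, and set W = I_v − P + QQᵀ (which is symmetric positive definite). Then the matrices N = (Qᵀ C⁺ Q)⁺ (an s×s matrix) and M = W^{−1/2} C W^{−1/2} (a v×v matrix, where W^{−1/2} is the inverse of the positive definite square root of W) have the same nonzero eigenvalues including multiplicities; that is, for every real λ ≠ 0, the dimension of the kernel of N − λ·I_s equals the dimension of the kernel of M − λ·I_v. -/

import Mathlib

open Matrix

/-- The column space of a real matrix. -/
def colSpace {m n : ℕ} (A : Matrix (Fin m) (Fin n) ℝ) : Submodule ℝ (Fin m → ℝ) :=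
  LinearMap.range A.mulVecLin

/-- `B` is the Moore–Penrose pseudoinverse of `A`. -/
def IsMPInv {m n : ℕ} (A : Matrix (Fin m) (Fin n) ℝ) (B : Matrix (Fin n) (Fin m) ℝ) : Prop :=
  A * B * A = A ∧ B * A * B = B ∧ (A * B)ᵀ = A * B ∧ (B * A)ᵀ = B * A

namespace SMaux

lemma matrix_eq {m n : ℕ} {A B : Matrix (Fin m) (Fin n) ℝ}
    (h : ∀ x, A *ᵥ x = B *ᵥ x) : A = B := by
  apply Matrix.toLin'.injective
  rw [Matrix.toLin'_apply', Matrix.toLin'_apply']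
  exact LinearMap.ext fun x => h x

lemma mem_colSpace {m n : ℕ} {A : Matrix (Fin m) (Fin n) ℝ} {x : Fin m → ℝ} :
    x ∈ colSpace A ↔ ∃ y, A *ᵥ y = x := by
  simp only [colSpace, LinearMap.mem_range, Matrix.mulVecLin_apply]

lemma colSpace_mul_le {m n p : ℕ} (A : Matrix (Fin m) (Fin n) ℝ)
    (B : Matrix (Fin n) (Fin p) ℝ) : colSpace (A * B) ≤ colSpace A := by
  intro x hx
  obtain ⟨y, hy⟩ := mem_colSpace.mp hx
  exact mem_colSpace.mpr ⟨B *ᵥ y, by rw [Matrix.mulVec_mulVec, hy]⟩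

lemma proj_fix {v m : ℕ} {P : Matrix (Fin v) (Fin v) ℝ} (hPidem : P * P = P)
    {A : Matrix (Fin v) (Fin m) ℝ} (h : colSpace A ≤ colSpace P) : P * A = A := by
  apply matrix_eq
  intro x
  have hx : A *ᵥ x ∈ colSpace P := h (mem_colSpace.mpr ⟨x, rfl⟩)
  obtain ⟨y, hy⟩ := mem_colSpace.mp hx
  rw [← Matrix.mulVec_mulVec, ← hy, Matrix.mulVec_mulVec, hPidem, hy]

lemma proj_unique {v : ℕ} {P E : Matrix (Fin v) (Fin v) ℝ} (hP : Pᵀ = P) (hPi : P * P = P)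
    (hE : Eᵀ = E) (hEi : E * E = E) (h : colSpace P = colSpace E) : P = E := by
  have h1 : E * P = P := proj_fix hEi h.le
  have h2 : P * E = E := proj_fix hPi h.ge
  calc P = E * P := h1.symm
    _ = Eᵀ * Pᵀ := by rw [hE, hP]
    _ = (P * E)ᵀ := (Matrix.transpose_mul P E).symm
    _ = Eᵀ := by rw [h2]
    _ = E := hE

lemma mp_unique {m n : ℕ} {A : Matrix (Fin m) (Fin n) ℝ} {B₁ B₂ : Matrix (Fin n) (Fin m) ℝ}
    (h₁ : IsMPInv A B₁) (h₂ : IsMPInv A B₂) : B₁ = B₂ := by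
  obtain ⟨a1, b1, c1, d1⟩ := h₁
  obtain ⟨a2, b2, c2, d2⟩ := h₂
  have hAB : A * B₁ = A * B₂ := by
    calc A * B₁ = (A * B₁)ᵀ := c1.symm
      _ = B₁ᵀ * Aᵀ := Matrix.transpose_mul A B₁
      _ = B₁ᵀ * (A * B₂ * A)ᵀ := by rw [a2]
      _ = B₁ᵀ * (Aᵀ * (A * B₂)ᵀ) := by rw [Matrix.transpose_mul (A * B₂) A]
      _ = B₁ᵀ * (Aᵀ * (A * B₂)) := by rw [c2]
      _ = (B₁ᵀ * Aᵀ) * (A * B₂) := by simp only [Matrix.mul_assoc]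
      _ = (A * B₁)ᵀ * (A * B₂) := by rw [Matrix.transpose_mul A B₁]
      _ = (A * B₁) * (A * B₂) := by rw [c1]
      _ = (A * B₁ * A) * B₂ := by simp only [Matrix.mul_assoc]
      _ = A * B₂ := by rw [a1]
  have hBA : B₁ * A = B₂ * A := by
    calc B₁ * A = (B₁ * A)ᵀ := d1.symm
      _ = Aᵀ * B₁ᵀ := Matrix.transpose_mul B₁ A
      _ = (A * (B₂ * A))ᵀ * B₁ᵀ := by rw [← Matrix.mul_assoc, a2]
      _ = ((B₂ * A)ᵀ * Aᵀ) * B₁ᵀ := by rw [Matrix.transpose_mul A (B₂ * A)]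
      _ = ((B₂ * A) * Aᵀ) * B₁ᵀ := by rw [d2]
      _ = (B₂ * A) * (Aᵀ * B₁ᵀ) := by simp only [Matrix.mul_assoc]
      _ = (B₂ * A) * (B₁ * A)ᵀ := by rw [Matrix.transpose_mul B₁ A]
      _ = (B₂ * A) * (B₁ * A) := by rw [d1]
      _ = B₂ * (A * B₁ * A) := by simp only [Matrix.mul_assoc]
      _ = B₂ * A := by rw [a1]
  calc B₁ = B₁ * A * B₁ := b1.symm
    _ = B₂ * A * B₁ := by rw [hBA]
    _ = B₂ * (A * B₁) := by rw [Matrix.mul_assoc]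
    _ = B₂ * (A * B₂) := by rw [hAB]
    _ = B₂ * A * B₂ := by rw [Matrix.mul_assoc]
    _ = B₂ := b2

lemma mem_ker_iff {n : ℕ} (A : Matrix (Fin n) (Fin n) ℝ) (μ : ℝ) (u : Fin n → ℝ) :
    u ∈ LinearMap.ker ((A - μ • 1).mulVecLin) ↔ A *ᵥ u = μ • u := by
  rw [LinearMap.mem_ker, Matrix.mulVecLin_apply, Matrix.sub_mulVec, sub_eq_zero,
    Matrix.smul_mulVec, Matrix.one_mulVec]

lemma ker_le {a b : ℕ} (X : Matrix (Fin a) (Fin b) ℝ) (Y : Matrix (Fin b) (Fin a) ℝ)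
    {μ : ℝ} (hμ : μ ≠ 0) :
    Module.finrank ℝ (LinearMap.ker ((Y * X - μ • 1).mulVecLin)) ≤
      Module.finrank ℝ (LinearMap.ker ((X * Y - μ • 1).mulVecLin)) := by
  set K₁ := LinearMap.ker ((Y * X - μ • 1).mulVecLin) with hK₁
  set K₂ := LinearMap.ker ((X * Y - μ • 1).mulVecLin) with hK₂
  have hmap : ∀ u, u ∈ K₁ → X *ᵥ u ∈ K₂ := by
    intro u hu
    rw [hK₁, mem_ker_iff] at hu
    rw [hK₂, mem_ker_iff]
    have h2 : Y *ᵥ (X *ᵥ u) = μ • u := (Matrix.mulVec_mulVec u Y X).trans hu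
    calc (X * Y) *ᵥ (X *ᵥ u) = X *ᵥ (Y *ᵥ (X *ᵥ u)) := (Matrix.mulVec_mulVec _ X Y).symm
      _ = X *ᵥ (μ • u) := by rw [h2]
      _ = μ • (X *ᵥ u) := X.mulVecLin.map_smul μ u
  let f : K₁ →ₗ[ℝ] K₂ :=
    LinearMap.codRestrict K₂ (X.mulVecLin.comp K₁.subtype) (fun c => hmap c c.2)
  have hinj : Function.Injective f := by
    intro u w huw
    have h' : X *ᵥ (u : Fin b → ℝ) = X *ᵥ (w : Fin b → ℝ) := congrArg Subtype.val huw
    have hu := (mem_ker_iff _ _ _).mp u.2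
    have hw := (mem_ker_iff _ _ _).mp w.2
    apply Subtype.ext
    apply smul_right_injective _ hμ
    calc μ • (u : Fin b → ℝ) = (Y * X) *ᵥ (u : Fin b → ℝ) := hu.symm
      _ = Y *ᵥ (X *ᵥ (u : Fin b → ℝ)) := (Matrix.mulVec_mulVec _ Y X).symm
      _ = Y *ᵥ (X *ᵥ (w : Fin b → ℝ)) := by rw [h']
      _ = (Y * X) *ᵥ (w : Fin b → ℝ) := Matrix.mulVec_mulVec _ Y X
      _ = μ • (w : Fin b → ℝ) := hw
  exact LinearMap.finrank_le_finrank_of_injective hinj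

/-- Rewrite a length-2 identity inside a left-associated chain. -/
lemma ext2 {k m n p : ℕ} (X : Matrix (Fin k) (Fin m) ℝ) {A : Matrix (Fin m) (Fin n) ℝ}
    {B : Matrix (Fin n) (Fin p) ℝ} {D : Matrix (Fin m) (Fin p) ℝ} (h : A * B = D) :
    X * A * B = X * D := by rw [Matrix.mul_assoc, h]

/-- Rewrite a length-3 identity inside a left-associated chain. -/
lemma ext3 {k m n p q : ℕ} (X : Matrix (Fin k) (Fin m) ℝ) {A : Matrix (Fin m) (Fin n) ℝ}
    {B : Matrix (Fin n) (Fin p) ℝ} {E : Matrix (Fin p) (Fin q) ℝ}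
    {D : Matrix (Fin m) (Fin q) ℝ} (h : A * B * E = D) :
    X * A * B * E = X * D := by
  rw [Matrix.mul_assoc, Matrix.mul_assoc, ← Matrix.mul_assoc A B E, h]

end SMaux

open SMaux in
theorem stmt0 (v s : ℕ) (C : Matrix (Fin v) (Fin v) ℝ) (hC : C.PosSemidef)
    (Q : Matrix (Fin v) (Fin s) ℝ) (hQ : colSpace Q = colSpace C)
    (P : Matrix (Fin v) (Fin v) ℝ) (hPsymm : Pᵀ = P) (hPidem : P * P = P)
    (hPrange : colSpace P = colSpace C)
    (Cp : Matrix (Fin v) (Fin v) ℝ) (hCp : IsMPInv C Cp)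
    (N : Matrix (Fin s) (Fin s) ℝ) (hN : IsMPInv (Qᵀ * Cp * Q) N)
    (Wsq : Matrix (Fin v) (Fin v) ℝ) (hWsq : Wsq.PosDef)
    (hWsqW : Wsq * Wsq = 1 - P + Q * Qᵀ) :
    (1 - P + Q * Qᵀ).PosDef ∧
      ∀ μ : ℝ, μ ≠ 0 →
        Module.finrank ℝ (LinearMap.ker ((N - μ • 1).mulVecLin)) =
          Module.finrank ℝ (LinearMap.ker ((Wsq⁻¹ * C * Wsq⁻¹ - μ • 1).mulVecLin)) := by
  -- basic symmetry facts
  have hCsym : Cᵀ = C := by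
    have h1 : Cᴴ = C := hC.1
    rwa [Matrix.conjTranspose_eq_transpose_of_trivial] at h1
  have hWsqSym : Wsqᵀ = Wsq := by
    have h1 : Wsqᴴ = Wsq := hWsq.1
    rwa [Matrix.conjTranspose_eq_transpose_of_trivial] at h1
  -- positive definiteness of W
  have hWdet : IsUnit Wsq.det := (Matrix.isUnit_iff_isUnit_det Wsq).mp hWsq.isUnit
  have hWPD : (1 - P + Q * Qᵀ).PosDef := by
    rw [← hWsqW]
    refine Matrix.posDef_iff_dotProduct_mulVec.mpr ⟨?_, ?_⟩
    · show (Wsq * Wsq)ᴴ = Wsq * Wsq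
      rw [Matrix.conjTranspose_mul, hWsq.1.eq]
    · intro x hx
      have hy : Wsq *ᵥ x ≠ 0 := by
        intro h
        apply hx
        exact Matrix.mulVec_injective_iff_isUnit.mpr hWsq.isUnit
          (h.trans (Matrix.mulVec_zero Wsq).symm)
      have hvm : x ᵥ* Wsq = Wsq *ᵥ x := by
        conv_lhs => rw [← hWsqSym]
        rw [Matrix.vecMul_transpose]
      have key : star x ⬝ᵥ (Wsq * Wsq) *ᵥ x = star (Wsq *ᵥ x) ⬝ᵥ (Wsq *ᵥ x) := by
        rw [← Matrix.mulVec_mulVec, Matrix.dotProduct_mulVec]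
        simp only [star_trivial]
        rw [hvm]
      rw [key]
      exact Matrix.dotProduct_star_self_pos_iff.mpr hy
  refine ⟨hWPD, ?_⟩
  -- projection facts
  have hPQ : P * Q = Q := proj_fix hPidem (by rw [hQ, hPrange])
  have hQtP : Qᵀ * P = Qᵀ := by
    have h1 := congrArg Matrix.transpose hPQ
    rwa [Matrix.transpose_mul, hPsymm] at h1
  have hPC : P * C = C := proj_fix hPidem (by rw [hPrange])
  have hCP : C * P = C := by
    have h1 := congrArg Matrix.transpose hPC
    rwa [Matrix.transpose_mul, hPsymm, hCsym] at h1
  -- Cp * C = P and C * Cp = P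
  obtain ⟨hc1, hc2, hc3, hc4⟩ := hCp
  have hCpC : Cp * C = P := by
    apply (proj_unique hPsymm hPidem ?_ ?_ ?_).symm
    · exact hc4
    · calc Cp * C * (Cp * C) = Cp * (C * Cp * C) := by
            rw [Matrix.mul_assoc, ← Matrix.mul_assoc C Cp C]
        _ = Cp * C := by rw [hc1]
    · rw [hPrange]
      apply le_antisymm
      · have hEC : (Cp * C) * C = C := by
          calc (Cp * C) * C = ((Cp * C) * C)ᵀᵀ := (Matrix.transpose_transpose _).symm
            _ = (Cᵀ * (Cp * C)ᵀ)ᵀ := by rw [Matrix.transpose_mul]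
            _ = (C * (Cp * C))ᵀ := by rw [hCsym, hc4]
            _ = (C * Cp * C)ᵀ := by rw [Matrix.mul_assoc]
            _ = Cᵀ := by rw [hc1]
            _ = C := hCsym
        conv_lhs => rw [← hEC]
        exact colSpace_mul_le (Cp * C) C
      · have hE : Cp * C = C * Cpᵀ := by
          calc Cp * C = (Cp * C)ᵀ := hc4.symm
            _ = Cᵀ * Cpᵀ := Matrix.transpose_mul Cp C
            _ = C * Cpᵀ := by rw [hCsym]
        rw [hE]
        exact colSpace_mul_le C Cpᵀ
  have hCCp : C * Cp = P := by
    apply (proj_unique hPsymm hPidem ?_ ?_ ?_).symm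
    · exact hc3
    · calc C * Cp * (C * Cp) = (C * Cp * C) * Cp := by rw [← Matrix.mul_assoc]
        _ = C * Cp := by rw [hc1]
    · rw [hPrange]
      apply le_antisymm
      · conv_lhs => rw [← hc1]
        exact colSpace_mul_le (C * Cp) C
      · exact colSpace_mul_le C Cp
  have hCpP : Cp * P = Cp := by
    rw [← hCCp, ← Matrix.mul_assoc]; exact hc2
  have hPCp : P * Cp = Cp := by
    rw [← hCpC]; exact hc2
  -- inverse facts
  set Wi : Matrix (Fin v) (Fin v) ℝ := Wsq⁻¹ * Wsq⁻¹ with hWi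
  have hWsqinv : Wsq * Wsq⁻¹ = 1 := Matrix.mul_nonsing_inv Wsq hWdet
  have hWsqinv' : Wsq⁻¹ * Wsq = 1 := Matrix.nonsing_inv_mul Wsq hWdet
  have hWWi : (1 - P + Q * Qᵀ) * Wi = 1 := by
    rw [← hWsqW, hWi, Matrix.mul_assoc, ← Matrix.mul_assoc Wsq Wsq⁻¹ Wsq⁻¹,
      hWsqinv, Matrix.one_mul, hWsqinv]
  have hWiW : Wi * (1 - P + Q * Qᵀ) = 1 := by
    rw [← hWsqW, hWi, Matrix.mul_assoc, ← Matrix.mul_assoc Wsq⁻¹ Wsq Wsq,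
      hWsqinv', Matrix.one_mul, hWsqinv']
  have hWiSym : Wiᵀ = Wi := by
    rw [hWi, Matrix.transpose_mul, Matrix.transpose_nonsing_inv, hWsqSym]
  -- key identities
  have hPW : P * (1 - P + Q * Qᵀ) = Q * Qᵀ := by
    rw [mul_add, mul_sub, mul_one, hPidem, ← Matrix.mul_assoc, hPQ, sub_self, zero_add]
  have hWP : (1 - P + Q * Qᵀ) * P = Q * Qᵀ := by
    have hWsym : (1 - P + Q * Qᵀ)ᵀ = 1 - P + Q * Qᵀ := by
      rw [Matrix.transpose_add, Matrix.transpose_sub, Matrix.transpose_one, hPsymm,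
        Matrix.transpose_mul, Matrix.transpose_transpose]
    calc (1 - P + Q * Qᵀ) * P = ((1 - P + Q * Qᵀ) * P)ᵀᵀ := (Matrix.transpose_transpose _).symm
      _ = (Pᵀ * (1 - P + Q * Qᵀ)ᵀ)ᵀ := by rw [Matrix.transpose_mul]
      _ = (P * (1 - P + Q * Qᵀ))ᵀ := by rw [hPsymm, hWsym]
      _ = (Q * Qᵀ)ᵀ := by rw [hPW]
      _ = Q * Qᵀ := by rw [Matrix.transpose_mul, Matrix.transpose_transpose]
  have key1 : Q * Qᵀ * Wi = P := by
    rw [← hPW, Matrix.mul_assoc, hWWi, mul_one]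
  have key2 : Wi * Q * Qᵀ = P := by
    rw [Matrix.mul_assoc, ← hWP, ← Matrix.mul_assoc, hWiW, Matrix.one_mul]
  -- the explicit formula for N
  set B : Matrix (Fin s) (Fin s) ℝ := Qᵀ * Wi * C * Wi * Q with hB
  set A : Matrix (Fin s) (Fin s) ℝ := Qᵀ * Cp * Q with hA
  have hAB : A * B = Qᵀ * Wi * Q := by
    calc A * B = Qᵀ * Cp * Q * Qᵀ * Wi * C * Wi * Q := by
          rw [hA, hB]; simp only [Matrix.mul_assoc]
      _ = Qᵀ * Cp * P * C * Wi * Q := by rw [ext3 (Qᵀ * Cp) key1]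
      _ = Qᵀ * Cp * C * Wi * Q := by rw [ext2 Qᵀ hCpP]
      _ = Qᵀ * P * Wi * Q := by rw [ext2 Qᵀ hCpC]
      _ = Qᵀ * Wi * Q := by rw [hQtP]
  have hBA : B * A = Qᵀ * Wi * Q := by
    calc B * A = Qᵀ * Wi * C * Wi * Q * Qᵀ * Cp * Q := by
          rw [hA, hB]; simp only [Matrix.mul_assoc]
      _ = Qᵀ * Wi * C * P * Cp * Q := by rw [ext3 (Qᵀ * Wi * C) key2]
      _ = Qᵀ * Wi * C * Cp * Q := by rw [ext2 (Qᵀ * Wi) hCP]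
      _ = Qᵀ * Wi * P * Q := by rw [ext2 (Qᵀ * Wi) hCCp]
      _ = Qᵀ * Wi * Q := by rw [ext2 (Qᵀ * Wi) hPQ]
  have hABsym : (Qᵀ * Wi * Q)ᵀ = Qᵀ * Wi * Q := by
    rw [Matrix.transpose_mul, Matrix.transpose_mul, Matrix.transpose_transpose, hWiSym]
    simp only [Matrix.mul_assoc]
  have hMPB : IsMPInv A B := by
    refine ⟨?_, ?_, ?_, ?_⟩
    · calc A * B * A = Qᵀ * Wi * Q * Qᵀ * Cp * Q := by
            rw [hAB, hA]; simp only [Matrix.mul_assoc]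
        _ = Qᵀ * P * Cp * Q := by rw [ext3 Qᵀ key2]
        _ = Qᵀ * Cp * Q := by rw [ext2 Qᵀ hPCp]
        _ = A := hA.symm
    · calc B * A * B = Qᵀ * Wi * Q * Qᵀ * Wi * C * Wi * Q := by
            rw [hBA, hB]; simp only [Matrix.mul_assoc]
        _ = Qᵀ * Wi * P * C * Wi * Q := by rw [ext3 (Qᵀ * Wi) key1]
        _ = Qᵀ * Wi * C * Wi * Q := by rw [ext2 (Qᵀ * Wi) hPC]
        _ = B := hB.symm
    · rw [hAB]; exact hABsym
    · rw [hBA]; exact hABsym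
  have hNB : N = B := mp_unique hN hMPB
  -- the factorization
  intro μ hμ
  set X : Matrix (Fin v) (Fin s) ℝ := Wsq⁻¹ * Q with hX
  set Y : Matrix (Fin s) (Fin v) ℝ := Qᵀ * Wi * C * Wsq⁻¹ with hY
  have hYX : Y * X = B := by
    calc Y * X = Qᵀ * Wi * C * Wi * Q := by
          rw [hX, hY, hWi]; simp only [Matrix.mul_assoc]
      _ = B := hB.symm
  have hXY : X * Y = Wsq⁻¹ * C * Wsq⁻¹ := by
    calc X * Y = Wsq⁻¹ * Q * Qᵀ * Wi * C * Wsq⁻¹ := by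
          rw [hX, hY]; simp only [Matrix.mul_assoc]
      _ = Wsq⁻¹ * P * C * Wsq⁻¹ := by rw [ext3 Wsq⁻¹ key1]
      _ = Wsq⁻¹ * C * Wsq⁻¹ := by rw [ext2 Wsq⁻¹ hPC]
  rw [hNB, ← hYX, ← hXY]
  exact le_antisymm (ker_le X Y hμ) (ker_le Y X hμ)
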